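/- arXiv:2009.04738 — 2 statements merged into one kernel-verified Lean document; each statement's English description precedes it below -/
import Mathlib

section
/- For every graph G, the signless Laplacian spectral radius satisfies q_1(G) ≤ max over vertices v of (d_v + (1/d_v) · Σ_{w ∈ N(v)} d_w), where the maximum is over vertices v of positive degree (and q_1(G) = 0 if G has no edges). -/
open Matrix

noncomputable section
open scoped Classical

/-- The complete split graph `S_{n,k} = K_k ∇ (n-k)K_1`. -/
def splitGraph (n k : ℕ) : SimpleGraph (Fin n) where
  Adj i j := i ≠ j ∧ (i.val < k ∨ j.val < k)
  symm := ⟨fun i j h => ⟨h.1.symm, h.2.symm⟩⟩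
  loopless := ⟨fun i h => h.1 rfl⟩

/-- The graph `K_m ∪ (n-m)K_1`: a clique on the first `m` vertices plus isolated vertices. -/
def cliqueUnion (n m : ℕ) : SimpleGraph (Fin n) where
  Adj i j := i ≠ j ∧ i.val < m ∧ j.val < m
  symm := ⟨fun i j h => ⟨h.1.symm, h.2.2, h.2.1⟩⟩
  loopless := ⟨fun i h => h.1 rfl⟩

/-- The `k`-fan `F_k = K_1 ∇ kK_2`: vertex `0` is the common center, and for `m < k` the
vertices `2m+1, 2m+2` form the `m`-th edge of the matching joined to the center. -/
def fan (k : ℕ) : SimpleGraph (Fin (2 * k + 1)) where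
  Adj i j := i ≠ j ∧ (i = 0 ∨ j = 0 ∨ (i.val - 1) / 2 = (j.val - 1) / 2)
  symm := by
    refine ⟨?_⟩
    rintro i j ⟨h1, h2⟩
    refine ⟨h1.symm, ?_⟩
    rcases h2 with h | h | h
    · exact Or.inr (Or.inl h)
    · exact Or.inl h
    · exact Or.inr (Or.inr h.symm)
  loopless := ⟨fun i h => h.1 rfl⟩

/-- `G` contains a (not necessarily induced) subgraph isomorphic to `H`. -/
def ContainsSub {V W : Type*} (G : SimpleGraph V) (H : SimpleGraph W) : Prop :=
  ∃ f : W → V, Function.Injective f ∧ ∀ a b, H.Adj a b → G.Adj (f a) (f b)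

/-- `G` is `F_k`-free. -/
def FanFree {V : Type*} (G : SimpleGraph V) (k : ℕ) : Prop := ¬ ContainsSub G (fan k)

/-- `G` contains `k` pairwise disjoint edges. -/
def HasMatching {V : Type*} (G : SimpleGraph V) (k : ℕ) : Prop :=
  ∃ p : Fin k → V × V, (∀ i, G.Adj (p i).1 (p i).2) ∧
    ∀ i j, i ≠ j → (p i).1 ≠ (p j).1 ∧ (p i).1 ≠ (p j).2 ∧
      (p i).2 ≠ (p j).1 ∧ (p i).2 ≠ (p j).2

/-- The signless Laplacian matrix `Q(G) = D(G) + A(G)`. -/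
def signlessLaplacian {V : Type*} [Fintype V] (G : SimpleGraph V) : Matrix V V ℝ :=
  Matrix.of fun i j =>
    (if i = j then ((G.neighborSet i).ncard : ℝ) else 0) + (if G.Adj i j then 1 else 0)

/-- The signless Laplacian spectral radius `q_1(G)`: the largest eigenvalue of `Q(G)`. -/
def q1 {V : Type*} [Fintype V] (G : SimpleGraph V) : ℝ :=
  sSup (spectrum ℝ (signlessLaplacian G))

/-- The largest eigenvalue of a real matrix. -/
def lam1 {m : Type*} [Fintype m] [DecidableEq m] (M : Matrix m m ℝ) : ℝ :=
  sSup (spectrum ℝ M)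


/-- `q_1(G) ≤ max_v (d_v + (1/d_v) Σ_{w ∈ N(v)} d_w)`, the maximum being over
vertices of positive degree, and `q_1(G) = 0` if `G` has no edges. -/
theorem stmt2 {V : Type*} [Fintype V] (G : SimpleGraph V) :
    (G.edgeSet = ∅ → q1 G = 0) ∧
    (G.edgeSet.Nonempty →
      q1 G ≤ sSup {x : ℝ | ∃ v : V, 0 < (G.neighborSet v).ncard ∧
        x = ((G.neighborSet v).ncard : ℝ) + (1 / ((G.neighborSet v).ncard : ℝ)) *
              ∑ w ∈ (G.neighborSet v).toFinset, ((G.neighborSet w).ncard : ℝ)}) := by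
  constructor
  · intro hE
    have hAdj : ∀ v w : V, ¬ G.Adj v w := by
      intro v w h
      have hm : s(v, w) ∈ G.edgeSet := h
      rw [hE] at hm
      exact hm
    have hns : ∀ v, G.neighborSet v = ∅ := by
      intro v; ext u; simp [SimpleGraph.mem_neighborSet, hAdj]
    have hQ0 : signlessLaplacian G = 0 := by
      ext i j
      simp [signlessLaplacian, hAdj, hns]
    unfold q1
    rw [hQ0]
    by_cases hV : Nonempty V
    · obtain ⟨v⟩ := hV
      haveI : Nontrivial (Matrix V V ℝ) := by
        refine ⟨0, 1, fun h => ?_⟩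
        have := congrFun (congrFun h v) v
        rw [Matrix.zero_apply, Matrix.one_apply_eq] at this
        exact zero_ne_one this
      rw [spectrum.zero_eq]
      exact csSup_singleton 0
    · haveI : IsEmpty V := not_nonempty_iff.mp hV
      haveI : Subsingleton (Matrix V V ℝ) :=
        ⟨fun M N => by ext i j; exact isEmptyElim i⟩
      have hsp : spectrum ℝ (0 : Matrix V V ℝ) = ∅ := by
        ext z
        simp [spectrum.mem_iff, isUnit_of_subsingleton]
      rw [hsp, Real.sSup_empty]
  · intro hE
    show sSup (spectrum ℝ (signlessLaplacian G)) ≤ _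
    rw [show signlessLaplacian G = Matrix.of fun i j =>
        (if i = j then ((G.neighborSet i).ncard : ℝ) else 0) +
          (if G.Adj i j then 1 else 0) from rfl]
    classical
    set Q : Matrix V V ℝ := Matrix.of fun i j =>
      (if i = j then ((G.neighborSet i).ncard : ℝ) else 0) + (if G.Adj i j then 1 else 0)
      with hQ
    set d : V → ℕ := fun v => (G.neighborSet v).ncard with hd
    set f : V → ℝ := fun v => (d v : ℝ) + (1 / (d v : ℝ)) *
        ∑ w ∈ (G.neighborSet v).toFinset, (d w : ℝ) with hf
    set Sset : Set ℝ := {x : ℝ | ∃ v : V, 0 < d v ∧ x = f v} with hS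
    -- Sset as image
    have hSim : Sset = f '' {v | 0 < d v} := by
      ext x; simp [hS, Set.mem_image, eq_comm]
    have hbdd : BddAbove Sset := by
      rw [hSim]; exact (Set.toFinite _).image f |>.bddAbove
    -- nonempty element
    obtain ⟨e, he⟩ := hE
    induction e using Sym2.ind with
    | _ a b =>
    rw [SimpleGraph.mem_edgeSet] at he
    have hda : 0 < d a := by
      rw [hd]
      exact Set.ncard_pos (Set.toFinite _) |>.mpr ⟨b, he⟩
    have hfa : f a ∈ Sset := ⟨a, hda, rfl⟩
    have hfa0 : 0 ≤ f a := by
      have h1 : (0:ℝ) ≤ ∑ w ∈ (G.neighborSet a).toFinset, (d w : ℝ) :=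
        Finset.sum_nonneg fun w _ => by positivity
      have : (0:ℝ) ≤ (1 / (d a : ℝ)) * ∑ w ∈ (G.neighborSet a).toFinset, (d w : ℝ) := by
        positivity
      rw [hf]; positivity
    have hS0 : 0 ≤ sSup Sset := hfa0.trans (le_csSup hbdd hfa)
    refine Real.sSup_le ?_ hS0
    intro μ hμ
    -- extract eigenvector
    have hdet : ((algebraMap ℝ (Matrix V V ℝ) μ) - Q).det = 0 := by
      rw [spectrum.mem_iff] at hμ
      by_contra h
      exact hμ ((Matrix.isUnit_iff_isUnit_det _).mpr (isUnit_iff_ne_zero.mpr h))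
    obtain ⟨x, hx0, hxe⟩ := Matrix.exists_mulVec_eq_zero_iff.mpr hdet
    have heig : Q *ᵥ x = μ • x := by
      have h1 : (algebraMap ℝ (Matrix V V ℝ)) μ *ᵥ x - Q *ᵥ x = 0 := by
        rw [← Matrix.sub_mulVec, hxe]
      have h3 : (algebraMap ℝ (Matrix V V ℝ)) μ *ᵥ x = μ • x := by
        rw [Algebra.algebraMap_eq_smul_one, Matrix.smul_mulVec, Matrix.one_mulVec]
      rw [h3] at h1
      exact (sub_eq_zero.mp h1).symm
    -- normalized eigenvector
    set D : V → ℝ := fun v => if d v = 0 then 1 else (d v : ℝ) with hD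
    have hDpos : ∀ v, 0 < D v := by
      intro v; rw [hD]; dsimp only; split
      · norm_num
      · exact_mod_cast Nat.pos_of_ne_zero ‹_›
    set y : V → ℝ := fun v => x v / D v with hy
    obtain ⟨w, hw⟩ := Function.ne_iff.mp hx0
    have : Nonempty V := ⟨w⟩
    obtain ⟨v₀, -, hmax⟩ := Finset.exists_max_image Finset.univ (fun v => |y v|)
      Finset.univ_nonempty
    have hmax' : ∀ v, |y v| ≤ |y v₀| := fun v => hmax v (Finset.mem_univ v)
    have hyv₀ : 0 < |y v₀| := by
      refine lt_of_lt_of_le ?_ (hmax' w)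
      have : y w ≠ 0 := by
        rw [hy]; dsimp only
        exact div_ne_zero hw (hDpos w).ne'
      exact abs_pos.mpr this
    have hxy : ∀ v, x v = D v * y v := by
      intro v; rw [hy]; dsimp only; rw [mul_comm, div_mul_cancel₀ _ (hDpos v).ne']
    -- row equation
    have hrow : μ * x v₀ = (d v₀ : ℝ) * x v₀ + ∑ w ∈ (G.neighborSet v₀).toFinset, x w := by
      have h := (congrFun heig v₀).symm
      rw [Pi.smul_apply, smul_eq_mul] at h
      rw [h]
      show ∑ j, ((if v₀ = j then ((G.neighborSet v₀).ncard : ℝ) else 0)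
          + if G.Adj v₀ j then 1 else 0) * x j = _
      simp only [add_mul, ite_mul, one_mul, zero_mul, Finset.sum_add_distrib]
      congr 1
      · rw [Finset.sum_ite_eq]; simp [hd]
      · rw [← Finset.sum_filter]
        apply Finset.sum_congr _ (fun _ _ => rfl)
        ext u; simp
    rcases Nat.eq_zero_or_pos (d v₀) with hzero | hpos
    · -- isolated vertex: μ = 0
      have hns : G.neighborSet v₀ = ∅ := (Set.ncard_eq_zero (Set.toFinite _)).mp hzero
      have hxv : x v₀ ≠ 0 := by
        intro h
        have hy0 : y v₀ = 0 := by rw [hy]; dsimp only; rw [h, zero_div]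
        rw [hy0, abs_zero] at hyv₀; exact lt_irrefl 0 hyv₀
      have hsum : ∑ u ∈ (G.neighborSet v₀).toFinset, x u = 0 := by
        apply Finset.sum_eq_zero
        intro u hu
        rw [Set.mem_toFinset, hns] at hu
        exact absurd hu (Set.notMem_empty u)
      have hd0 : ((d v₀ : ℕ) : ℝ) = 0 := by exact_mod_cast hzero
      have : μ * x v₀ = 0 := by rw [hrow, hsum, hd0]; ring
      have hμ0 : μ = 0 := by
        rcases mul_eq_zero.mp this with h | h
        · exact h
        · exact absurd h hxv
      rw [hμ0]; exact hS0
    · -- positive degree case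
      have hDv₀ : D v₀ = (d v₀ : ℝ) := by rw [hD]; simp [hpos.ne']
      have hnb : ∀ u ∈ (G.neighborSet v₀).toFinset, x u = (d u : ℝ) * y u := by
        intro u hu
        rw [Set.mem_toFinset, SimpleGraph.mem_neighborSet] at hu
        have hdu : 0 < d u := by
          rw [hd]
          exact Set.ncard_pos (Set.toFinite _) |>.mpr ⟨v₀, hu.symm⟩
        have : D u = (d u : ℝ) := by rw [hD]; simp [hdu.ne']
        rw [hxy u, this]
      have key : (μ - (d v₀ : ℝ)) * ((d v₀ : ℝ) * y v₀) =
          ∑ u ∈ (G.neighborSet v₀).toFinset, (d u : ℝ) * y u := by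
        rw [← Finset.sum_congr rfl hnb]
        have := hrow
        rw [hxy v₀, hDv₀] at this
        linarith [this]
      have habs1 : |μ - (d v₀ : ℝ)| * ((d v₀ : ℝ) * |y v₀|) ≤
          (∑ u ∈ (G.neighborSet v₀).toFinset, (d u : ℝ)) * |y v₀| := by
        have h1 : |μ - (d v₀ : ℝ)| * ((d v₀ : ℝ) * |y v₀|) =
            |(μ - (d v₀ : ℝ)) * ((d v₀ : ℝ) * y v₀)| := by
          rw [abs_mul, abs_mul, abs_of_nonneg (by positivity : (0:ℝ) ≤ (d v₀ : ℝ))]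
        rw [h1, key, Finset.sum_mul]
        refine (Finset.abs_sum_le_sum_abs _ _).trans (Finset.sum_le_sum ?_)
        intro u _
        rw [abs_mul, abs_of_nonneg (by positivity : (0:ℝ) ≤ (d u : ℝ))]
        exact mul_le_mul_of_nonneg_left (hmax' u) (by positivity)
      have habs : |μ - (d v₀ : ℝ)| * (d v₀ : ℝ) ≤
          ∑ u ∈ (G.neighborSet v₀).toFinset, (d u : ℝ) := by
        have := habs1
        rw [show |μ - (d v₀:ℝ)| * ((d v₀:ℝ) * |y v₀|) = (|μ - (d v₀:ℝ)| * (d v₀:ℝ)) * |y v₀| by ring] at this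
        exact le_of_mul_le_mul_right this hyv₀
      have hμle : μ ≤ f v₀ := by
        have hdpos : (0:ℝ) < (d v₀ : ℝ) := by exact_mod_cast hpos
        have h2 : μ - (d v₀ : ℝ) ≤ (∑ u ∈ (G.neighborSet v₀).toFinset, (d u : ℝ)) / (d v₀ : ℝ) := by
          rw [le_div_iff₀ hdpos]
          refine le_trans ?_ habs
          exact mul_le_mul_of_nonneg_right (le_abs_self _) (by positivity)
        rw [hf]; dsimp only
        rw [one_div, inv_mul_eq_div]
        linarith
      exact hμle.trans (le_csSup hbdd ⟨v₀, hpos, rfl⟩)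

end
end

section
/- Let α ≥ 1 and n > (5α + 3)/2. If G is a graph on n vertices with matching number α and e(G) = αn - α(α+1)/2 edges, then G is isomorphic to the complete split graph S_{n,α}. -/
open Matrix

noncomputable section
open scoped Classical

open Finset

def EGVD {V : Type*} (x y : V × V) : Prop :=
  x.1 ≠ y.1 ∧ x.1 ≠ y.2 ∧ x.2 ≠ y.1 ∧ x.2 ≠ y.2

lemma EGVD.symm' {V : Type*} {x y : V × V} (h : EGVD x y) : EGVD y x :=
  ⟨h.1.symm, h.2.2.1.symm, h.2.1.symm, h.2.2.2.symm⟩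

lemma EG_aug {V : Type*} {G : SimpleGraph V} {a : ℕ} (p : Fin a → V × V)
    (hadj : ∀ i, G.Adj (p i).1 (p i).2)
    (hdisj : ∀ i j, i ≠ j → EGVD (p i) (p j))
    (D : Finset (Fin a)) {k : ℕ} (hk : k = D.card + 1) (q : Fin k → V × V)
    (hqadj : ∀ r, G.Adj (q r).1 (q r).2)
    (hqq : ∀ r s, r ≠ s → EGVD (q r) (q s))
    (hqp : ∀ r, ∀ i ∉ D, EGVD (q r) (p i)) :
    HasMatching G (a + 1) := by
  have hcard : Fintype.card ({i : Fin a // i ∉ D} ⊕ Fin k) = a + 1 := by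
    have h1 : Fintype.card {i : Fin a // i ∉ D} = a - D.card := by
      simpa using Fintype.card_subtype_compl (· ∈ D)
    have h2 : D.card ≤ a := by simpa using D.card_le_univ
    simp only [Fintype.card_sum, h1, hk, Fintype.card_fin]
    omega
  let e : Fin (a + 1) ≃ ({i : Fin a // i ∉ D} ⊕ Fin k) :=
    (Fintype.equivFinOfCardEq hcard).symm
  refine ⟨fun i => Sum.elim (fun i => p i.1) q (e i), fun i => ?_, fun i j hij => ?_⟩
  · rcases h : e i with i' | r
    · simp only [h, Sum.elim_inl]; exact hadj i'.1
    · simp only [h, Sum.elim_inr]; exact hqadj r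
  · have hne : e i ≠ e j := fun h => hij (e.injective h)
    rcases hi : e i with i' | r <;> rcases hj : e j with j' | s <;>
      simp only [hi, hj, Sum.elim_inl, Sum.elim_inr]
    · have : i'.1 ≠ j'.1 := by
        intro h; apply hne; rw [hi, hj]; exact congrArg Sum.inl (Subtype.ext h)
      exact hdisj _ _ this
    · exact (hqp s i'.1 i'.2).symm'
    · exact hqp r j'.1 j'.2
    · have : r ≠ s := by intro h; apply hne; rw [hi, hj, h]
      exact hqq _ _ this


def EGt {n a : ℕ} (G : SimpleGraph (Fin n)) (X Y : Fin a → Fin n) (U : Finset (Fin n))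
    (i : Fin a) : ℕ :=
  ∑ u ∈ U, ((if G.Adj (X i) u then 1 else 0) + (if G.Adj (Y i) u then 1 else 0))

def EGE {n a : ℕ} (G : SimpleGraph (Fin n)) (X Y : Fin a → Fin n) (i j : Fin a) : ℕ :=
  ∑ w ∈ ({X j, Y j} : Finset (Fin n)),
    ((if G.Adj (X i) w then 1 else 0) + (if G.Adj (Y i) w then 1 else 0))

lemma ite_adj_comm {n : ℕ} (G : SimpleGraph (Fin n)) (v w : Fin n) :
    (if G.Adj v w then (1:ℕ) else 0) = (if G.Adj w v then 1 else 0) := by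
  by_cases h : G.Adj v w
  · rw [if_pos h, if_pos h.symm]
  · rw [if_neg h, if_neg (fun hh => h hh.symm)]

section Helpers
variable {n a : ℕ} {G : SimpleGraph (Fin n)} {X Y : Fin a → Fin n} {U : Finset (Fin n)}

/-- hypotheses bundle -/
structure EGCtx (G : SimpleGraph (Fin n)) (X Y : Fin a → Fin n) (U : Finset (Fin n)) : Prop where
  adj : ∀ i, G.Adj (X i) (Y i)
  vd : ∀ i j, i ≠ j → EGVD (X i, Y i) (X j, Y j)
  hU : U = (univ.biUnion fun i => ({X i, Y i} : Finset (Fin n)))ᶜ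
  noM : ¬ HasMatching G (a + 1)
  orient : ∀ i, (¬ ∃ u ∈ U, G.Adj (X i) u) → ¬ ∃ u ∈ U, G.Adj (Y i) u

namespace EGCtx
variable (C : EGCtx G X Y U)
include C

lemma uX {u : Fin n} (hu : u ∈ U) (i : Fin a) : u ≠ X i := by
  intro h; rw [C.hU, Finset.mem_compl] at hu
  exact hu (Finset.mem_biUnion.2 ⟨i, mem_univ i, by simp [h]⟩)

lemma uY {u : Fin n} (hu : u ∈ U) (i : Fin a) : u ≠ Y i := by
  intro h; rw [C.hU, Finset.mem_compl] at hu
  exact hu (Finset.mem_biUnion.2 ⟨i, mem_univ i, by simp [h]⟩)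

lemma Xne (i : Fin a) : X i ≠ Y i := (C.adj i).ne

lemma XX {i j : Fin a} (h : i ≠ j) : X i ≠ X j := (C.vd i j h).1
lemma XY' {i j : Fin a} (h : i ≠ j) : X i ≠ Y j := (C.vd i j h).2.1
lemma YX {i j : Fin a} (h : i ≠ j) : Y i ≠ X j := (C.vd i j h).2.2.1
lemma YY {i j : Fin a} (h : i ≠ j) : Y i ≠ Y j := (C.vd i j h).2.2.2

lemma Uind {u v : Fin n} (hu : u ∈ U) (hv : v ∈ U) : ¬ G.Adj u v := by
  intro hadj
  refine C.noM (EG_aug (fun i => (X i, Y i)) C.adj C.vd ∅ (k := 1) (by simp)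
    ![(u, v)] (fun r => by fin_cases r <;> exact hadj) (fun r s hrs => by
      fin_cases r <;> fin_cases s <;> simp_all) ?_)
  intro r i _
  fin_cases r
  exact ⟨C.uX hu i, C.uY hu i, C.uX hv i, C.uY hv i⟩

lemma dich {i : Fin a} {u v : Fin n} (hu : u ∈ U) (hv : v ∈ U) (huv : u ≠ v)
    (h1 : G.Adj (X i) u) (h2 : G.Adj (Y i) v) : False := by
  refine C.noM (EG_aug (fun i => (X i, Y i)) C.adj C.vd {i} (k := 2) (by simp)
    ![(X i, u), (Y i, v)] (fun r => by fin_cases r <;> assumption) (fun r s hrs => by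
      have hd : EGVD (X i, u) (Y i, v) := ⟨C.Xne i, (C.uX hv i).symm, C.uY hu i, huv⟩
      fin_cases r <;> fin_cases s <;>
        first | exact absurd rfl hrs | exact hd | exact hd.symm') ?_)
  intro r j hj
  simp only [Finset.mem_singleton] at hj
  have hij : i ≠ j := fun h => hj h.symm
  fin_cases r
  · exact ⟨C.XX hij, C.XY' hij, C.uX hu j, C.uY hu j⟩
  · exact ⟨C.YX hij, C.YY hij, C.uX hv j, C.uY hv j⟩


lemma YYaug {i j : Fin a} (hij : i ≠ j) {u v : Fin n} (hu : u ∈ U) (hv : v ∈ U)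
    (huv : u ≠ v) (h1 : G.Adj (X i) u) (h2 : G.Adj (X j) v) (h3 : G.Adj (Y i) (Y j)) :
    False := by
  have hd01 : EGVD (X i, u) (X j, v) := ⟨C.XX hij, (C.uX hv i).symm, C.uX hu j, huv⟩
  have hd02 : EGVD (X i, u) (Y i, Y j) := ⟨C.Xne i, C.XY' hij, C.uY hu i, C.uY hu j⟩
  have hd12 : EGVD (X j, v) (Y i, Y j) := ⟨(C.YX hij).symm, C.Xne j, C.uY hv i, C.uY hv j⟩
  refine C.noM (EG_aug (fun i => (X i, Y i)) C.adj C.vd {i, j} (k := 3)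
    (by rw [Finset.card_pair hij]) ![(X i, u), (X j, v), (Y i, Y j)]
    (fun r => by fin_cases r <;> assumption) (fun r s hrs => by
      fin_cases r <;> fin_cases s <;>
        first | exact absurd rfl hrs | exact hd01 | exact hd02 | exact hd12 |
          exact hd01.symm' | exact hd02.symm' | exact hd12.symm') ?_)
  intro r k hk
  simp only [Finset.mem_insert, Finset.mem_singleton, not_or] at hk
  have hik : i ≠ k := fun h => hk.1 h.symm
  have hjk : j ≠ k := fun h => hk.2 h.symm
  fin_cases r
  · exact ⟨C.XX hik, C.XY' hik, C.uX hu k, C.uY hu k⟩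
  · exact ⟨C.XX hjk, C.XY' hjk, C.uX hv k, C.uY hv k⟩
  · exact ⟨C.YX hik, C.YY hik, C.YX hjk, C.YY hjk⟩

lemma mix2 {i j : Fin a} (hij : i ≠ j) {u v : Fin n} (hu : u ∈ U) (hv : v ∈ U)
    (huv : u ≠ v) (h1 : G.Adj (X i) u) (h2 : G.Adj (Y j) v) (h3 : G.Adj (Y i) (X j)) :
    False := by
  have hd01 : EGVD (X i, u) (Y j, v) := ⟨C.XY' hij, (C.uX hv i).symm, C.uY hu j, huv⟩
  have hd02 : EGVD (X i, u) (Y i, X j) := ⟨C.Xne i, C.XX hij, C.uY hu i, C.uX hu j⟩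
  have hd12 : EGVD (Y j, v) (Y i, X j) :=
    ⟨(C.YY hij).symm, (C.Xne j).symm, C.uY hv i, C.uX hv j⟩
  refine C.noM (EG_aug (fun i => (X i, Y i)) C.adj C.vd {i, j} (k := 3)
    (by rw [Finset.card_pair hij]) ![(X i, u), (Y j, v), (Y i, X j)]
    (fun r => by fin_cases r <;> assumption) (fun r s hrs => by
      fin_cases r <;> fin_cases s <;>
        first | exact absurd rfl hrs | exact hd01 | exact hd02 | exact hd12 |
          exact hd01.symm' | exact hd02.symm' | exact hd12.symm') ?_)
  intro r k hk
  simp only [Finset.mem_insert, Finset.mem_singleton, not_or] at hk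
  have hik : i ≠ k := fun h => hk.1 h.symm
  have hjk : j ≠ k := fun h => hk.2 h.symm
  fin_cases r
  · exact ⟨C.XX hik, C.XY' hik, C.uX hu k, C.uY hu k⟩
  · exact ⟨C.YX hjk, C.YY hjk, C.uX hv k, C.uY hv k⟩
  · exact ⟨C.YX hik, C.YY hik, C.XX hjk, C.XY' hjk⟩

lemma triple {i₁ i₂ j : Fin a} (h12 : i₁ ≠ i₂) (h1j : i₁ ≠ j) (h2j : i₂ ≠ j)
    {u₁ u₂ : Fin n} (hu1 : u₁ ∈ U) (hu2 : u₂ ∈ U) (huu : u₁ ≠ u₂)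
    (e1 : G.Adj (X i₁) u₁) (e2 : G.Adj (X i₂) u₂)
    (e3 : G.Adj (Y i₁) (X j)) (e4 : G.Adj (Y i₂) (Y j)) : False := by
  have hd01 : EGVD (X i₁, u₁) (X i₂, u₂) := ⟨C.XX h12, (C.uX hu2 i₁).symm, C.uX hu1 i₂, huu⟩
  have hd02 : EGVD (X i₁, u₁) (Y i₁, X j) := ⟨C.Xne i₁, C.XX h1j, C.uY hu1 i₁, C.uX hu1 j⟩
  have hd03 : EGVD (X i₁, u₁) (Y i₂, Y j) := ⟨C.XY' h12, C.XY' h1j, C.uY hu1 i₂, C.uY hu1 j⟩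
  have hd12 : EGVD (X i₂, u₂) (Y i₁, X j) :=
    ⟨(C.YX h12).symm, C.XX h2j, C.uY hu2 i₁, C.uX hu2 j⟩
  have hd13 : EGVD (X i₂, u₂) (Y i₂, Y j) := ⟨C.Xne i₂, C.XY' h2j, C.uY hu2 i₂, C.uY hu2 j⟩
  have hd23 : EGVD (Y i₁, X j) (Y i₂, Y j) :=
    ⟨C.YY h12, C.YY h1j, C.XY' h2j.symm, C.Xne j⟩
  have hD : ({i₁, i₂, j} : Finset (Fin a)).card = 3 := by
    rw [Finset.card_insert_of_notMem (by simp [h12, h1j]), Finset.card_pair h2j]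
  refine C.noM (EG_aug (fun i => (X i, Y i)) C.adj C.vd {i₁, i₂, j} (k := 4)
    (by rw [hD]) ![(X i₁, u₁), (X i₂, u₂), (Y i₁, X j), (Y i₂, Y j)]
    (fun r => by fin_cases r <;> assumption) (fun r s hrs => by
      fin_cases r <;> fin_cases s <;>
        first | exact absurd rfl hrs | exact hd01 | exact hd02 | exact hd03 |
          exact hd12 | exact hd13 | exact hd23 |
          exact hd01.symm' | exact hd02.symm' | exact hd03.symm' |
          exact hd12.symm' | exact hd13.symm' | exact hd23.symm') ?_)
  intro r k hk
  simp only [Finset.mem_insert, Finset.mem_singleton, not_or] at hk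
  have h1k : i₁ ≠ k := fun h => hk.1 h.symm
  have h2k : i₂ ≠ k := fun h => hk.2.1 h.symm
  have hjk : j ≠ k := fun h => hk.2.2 h.symm
  fin_cases r
  · exact ⟨C.XX h1k, C.XY' h1k, C.uX hu1 k, C.uY hu1 k⟩
  · exact ⟨C.XX h2k, C.XY' h2k, C.uX hu2 k, C.uY hu2 k⟩
  · exact ⟨C.YX h1k, C.YY h1k, C.XX hjk, C.XY' hjk⟩
  · exact ⟨C.YX h2k, C.YY h2k, C.YX hjk, C.YY hjk⟩


lemma EGEsymm (i j : Fin a) : EGE G X Y i j = EGE G X Y j i := by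
  unfold EGE
  rw [Finset.sum_pair (C.Xne j), Finset.sum_pair (C.Xne i),
    ite_adj_comm G (X i) (X j), ite_adj_comm G (Y i) (X j),
    ite_adj_comm G (X i) (Y j), ite_adj_comm G (Y i) (Y j)]
  omega

lemma EGEdiag (i : Fin a) : EGE G X Y i i = 2 := by
  unfold EGE
  rw [Finset.sum_pair (C.Xne i), if_neg (G.irrefl), if_neg (G.irrefl),
    if_pos (C.adj i), if_pos (C.adj i).symm]

lemma E_le_four (i j : Fin a) : EGE G X Y i j ≤ 4 := by
  unfold EGE
  rw [Finset.sum_pair (C.Xne j)]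
  split_ifs <;> omega

lemma E_eq_four {i j : Fin a} (h : EGE G X Y i j = 4) :
    G.Adj (X i) (X j) ∧ G.Adj (X i) (Y j) ∧ G.Adj (Y i) (X j) ∧ G.Adj (Y i) (Y j) := by
  unfold EGE at h
  rw [Finset.sum_pair (C.Xne j)] at h
  split_ifs at h <;> first | tauto | omega

lemma tspec (i : Fin a) : EGt G X Y U i =
    (U.filter (fun u => G.Adj (X i) u)).card + (U.filter (fun u => G.Adj (Y i) u)).card := by
  unfold EGt
  rw [Finset.sum_add_distrib, Finset.card_filter, Finset.card_filter]

lemma pd : ((univ : Finset (Fin a)) : Set (Fin a)).PairwiseDisjoint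
    (fun i => ({X i, Y i} : Finset (Fin n))) := by
  intro i _ j _ hij
  simp only [Function.onFun]
  rw [Finset.disjoint_left]
  intro v hv hv'
  simp only [Finset.mem_insert, Finset.mem_singleton] at hv hv'
  rcases hv with rfl | rfl <;> rcases hv' with h | h
  · exact C.XX hij h
  · exact C.XY' hij h
  · exact C.YX hij h
  · exact C.YY hij h

lemma Ucard : U.card + 2 * a = n := by
  have hMc : (univ.biUnion fun i => ({X i, Y i} : Finset (Fin n))).card = 2 * a := by
    rw [Finset.card_biUnion (fun i _ j _ hij => C.pd (mem_coe.2 (mem_univ i))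
      (mem_coe.2 (mem_univ j)) hij)]
    rw [Finset.sum_congr rfl (fun i _ => Finset.card_pair (C.Xne i)), Finset.sum_const,
      Finset.card_univ, Fintype.card_fin, smul_eq_mul, mul_comm]
  have hle : (univ.biUnion fun i => ({X i, Y i} : Finset (Fin n))).card ≤ n := by
    have := Finset.card_le_univ (univ.biUnion fun i => ({X i, Y i} : Finset (Fin n)))
    simpa using this
  rw [C.hU, Finset.card_compl, hMc, Fintype.card_fin]
  omega

lemma bigStruct {i : Fin a} (h3 : 3 ≤ EGt G X Y U i) :
    (U.filter (fun u => G.Adj (Y i) u)) = ∅ ∧ 3 ≤ (U.filter (fun u => G.Adj (X i) u)).card := by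
  have ht := C.tspec i
  by_cases hNYe : U.filter (fun u => G.Adj (Y i) u) = ∅
  · refine ⟨hNYe, ?_⟩
    rw [hNYe] at ht
    simp only [Finset.card_empty] at ht
    omega
  · exfalso
    obtain ⟨v, hv⟩ := Finset.nonempty_iff_ne_empty.2 hNYe
    simp only [Finset.mem_filter] at hv
    by_cases hNXe : U.filter (fun u => G.Adj (X i) u) = ∅
    · refine C.orient i ?_ ⟨v, hv.1, hv.2⟩
      rintro ⟨u, hu, hadj⟩
      have : u ∈ U.filter (fun u => G.Adj (X i) u) := Finset.mem_filter.2 ⟨hu, hadj⟩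
      rw [hNXe] at this
      exact absurd this (Finset.notMem_empty u)
    · obtain ⟨u, hu⟩ := Finset.nonempty_iff_ne_empty.2 hNXe
      simp only [Finset.mem_filter] at hu
      have hNXsub : U.filter (fun w => G.Adj (X i) w) ⊆ {v} := by
        intro u' hu'
        simp only [Finset.mem_filter] at hu'
        simp only [Finset.mem_singleton]
        by_contra hne
        exact C.dich hu'.1 hv.1 hne hu'.2 hv.2
      have hNYsub : U.filter (fun w => G.Adj (Y i) w) ⊆ {u} := by
        intro v' hv'
        simp only [Finset.mem_filter] at hv'
        simp only [Finset.mem_singleton]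
        by_contra hne
        exact C.dich hu.1 hv'.1 (fun h => hne h.symm) hu.2 hv'.2
      have c1 := Finset.card_le_card hNXsub
      have c2 := Finset.card_le_card hNYsub
      simp only [Finset.card_singleton] at c1 c2
      omega

lemma bigNX {i : Fin a} (h3 : 3 ≤ EGt G X Y U i) :
    3 ≤ (U.filter (fun u => G.Adj (X i) u)).card := (C.bigStruct h3).2

lemma bigYU {i : Fin a} (h3 : 3 ≤ EGt G X Y U i) {v : Fin n} (hv : v ∈ U) :
    ¬ G.Adj (Y i) v := by
  intro hadj
  have : v ∈ U.filter (fun u => G.Adj (Y i) u) := Finset.mem_filter.2 ⟨hv, hadj⟩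
  rw [(C.bigStruct h3).1] at this
  exact absurd this (Finset.notMem_empty v)

lemma big_t_le {i : Fin a} (h3 : 3 ≤ EGt G X Y U i) : EGt G X Y U i ≤ U.card := by
  have ht := C.tspec i
  rw [(C.bigStruct h3).1] at ht
  simp only [Finset.card_empty] at ht
  have := Finset.card_le_card (Finset.filter_subset (fun u => G.Adj (X i) u) U)
  omega

lemma E_le_three_bigbig {i j : Fin a} (hij : i ≠ j) (hbi : 3 ≤ EGt G X Y U i)
    (hbj : 3 ≤ EGt G X Y U j) : EGE G X Y i j ≤ 3 := by
  by_contra hc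
  have h4 : EGE G X Y i j = 4 := by have := C.E_le_four i j; omega
  obtain ⟨-, -, -, hYY⟩ := C.E_eq_four h4
  obtain ⟨u, hu⟩ := Finset.card_pos.1 (by have := C.bigNX hbi; omega :
    0 < (U.filter (fun u => G.Adj (X i) u)).card)
  obtain ⟨v, hv, hvu⟩ := Finset.exists_mem_ne
    (s := U.filter (fun u => G.Adj (X j) u)) (by have := C.bigNX hbj; omega) u
  simp only [Finset.mem_filter] at hu hv
  exact C.YYaug hij hu.1 hv.1 (fun h => hvu h.symm) hu.2 hv.2 hYY

lemma E_le_three_bigsmall {i j : Fin a} (hij : i ≠ j) (hbi : 3 ≤ EGt G X Y U i)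
    (htj : 1 ≤ EGt G X Y U j) : EGE G X Y i j ≤ 3 := by
  by_contra hc
  have h4 : EGE G X Y i j = 4 := by have := C.E_le_four i j; omega
  obtain ⟨-, -, hYX, hYY⟩ := C.E_eq_four h4
  have ht := C.tspec j
  have hbi' := C.bigNX hbi
  by_cases hX : 0 < (U.filter (fun u => G.Adj (X j) u)).card
  · obtain ⟨u', hu'⟩ := Finset.card_pos.1 hX
    simp only [Finset.mem_filter] at hu'
    obtain ⟨u, hu, huu⟩ := Finset.exists_mem_ne
      (s := U.filter (fun u => G.Adj (X i) u)) (by omega) u'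
    simp only [Finset.mem_filter] at hu
    exact C.YYaug hij hu.1 hu'.1 huu hu.2 hu'.2 hYY
  · have hY : 0 < (U.filter (fun u => G.Adj (Y j) u)).card := by omega
    obtain ⟨u', hu'⟩ := Finset.card_pos.1 hY
    simp only [Finset.mem_filter] at hu'
    obtain ⟨u, hu, huu⟩ := Finset.exists_mem_ne
      (s := U.filter (fun u => G.Adj (X i) u)) (by omega) u'
    simp only [Finset.mem_filter] at hu
    exact C.mix2 hij hu.1 hu'.1 huu hu.2 hu'.2 hYX

lemma no_two_big_four {j i₁ i₂ : Fin a} (h1j : i₁ ≠ j) (h2j : i₂ ≠ j) (h12 : i₁ ≠ i₂)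
    (hb1 : 3 ≤ EGt G X Y U i₁) (hb2 : 3 ≤ EGt G X Y U i₂)
    (hE1 : EGE G X Y i₁ j = 4) (hE2 : EGE G X Y i₂ j = 4) : False := by
  obtain ⟨-, -, e3, -⟩ := C.E_eq_four hE1
  obtain ⟨-, -, -, e4⟩ := C.E_eq_four hE2
  obtain ⟨u₁, hu1⟩ := Finset.card_pos.1 (by have := C.bigNX hb1; omega :
    0 < (U.filter (fun u => G.Adj (X i₁) u)).card)
  obtain ⟨u₂, hu2, huu⟩ := Finset.exists_mem_ne
    (s := U.filter (fun u => G.Adj (X i₂) u)) (by have := C.bigNX hb2; omega) u₁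
  simp only [Finset.mem_filter] at hu1 hu2
  exact C.triple h12 h1j h2j hu1.1 hu2.1 (fun h => huu h.symm) hu1.2 hu2.2 e3 e4

lemma count : 2 * G.edgeFinset.card =
    2 * a + ∑ j, (2 * EGt G X Y U j + ∑ i ∈ univ.erase j, EGE G X Y i j) := by
  have hdeg : ∀ v, G.degree v = ∑ w, (if G.Adj v w then (1:ℕ) else 0) := by
    intro v
    rw [← Finset.card_filter, SimpleGraph.degree, SimpleGraph.neighborFinset_eq_filter]
  set Mv : Finset (Fin n) := univ.biUnion (fun i => ({X i, Y i} : Finset (Fin n))) with hMv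
  have hUc : Mvᶜ = U := C.hU.symm
  have split_univ : ∀ f : Fin n → ℕ, ∑ v, f v = ∑ v ∈ Mv, f v + ∑ v ∈ U, f v := by
    intro f; rw [← hUc, Finset.sum_add_sum_compl]
  have hMvsum : ∀ f : Fin n → ℕ,
      ∑ v ∈ Mv, f v = ∑ i, (f (X i) + f (Y i)) := by
    intro f
    rw [hMv, Finset.sum_biUnion (C.pd)]
    exact Finset.sum_congr rfl (fun i _ => Finset.sum_pair (C.Xne i))
  have hrow : ∀ i, G.degree (X i) + G.degree (Y i) =
      (∑ j, EGE G X Y i j) + EGt G X Y U i := by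
    intro i
    rw [hdeg, hdeg, ← Finset.sum_add_distrib]
    rw [split_univ (fun w => (if G.Adj (X i) w then 1 else 0) + (if G.Adj (Y i) w then 1 else 0))]
    rw [hMvsum]
    unfold EGE EGt
    congr 1
    exact Finset.sum_congr rfl (fun j _ =>
      (Finset.sum_pair (f := fun w => (if G.Adj (X i) w then (1:ℕ) else 0) +
        (if G.Adj (Y i) w then 1 else 0)) (C.Xne j)).symm)
  have hUdeg : ∑ v ∈ U, G.degree v = ∑ j, EGt G X Y U j := by
    have h1 : ∀ v ∈ U, G.degree v = ∑ w ∈ Mv, (if G.Adj v w then (1:ℕ) else 0) := by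
      intro v hv
      rw [hdeg, split_univ (fun w => if G.Adj v w then (1:ℕ) else 0)]
      have : ∑ w ∈ U, (if G.Adj v w then (1:ℕ) else 0) = 0 := by
        apply Finset.sum_eq_zero
        intro w hw
        rw [if_neg (C.Uind hv hw)]
      omega
    rw [Finset.sum_congr rfl h1, Finset.sum_comm]
    rw [hMv, Finset.sum_biUnion (C.pd)]
    apply Finset.sum_congr rfl
    intro j _
    rw [Finset.sum_pair (C.Xne j)]
    unfold EGt
    rw [Finset.sum_add_distrib]
    congr 1
    · exact Finset.sum_congr rfl (fun v _ => ite_adj_comm G v (X j))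
    · exact Finset.sum_congr rfl (fun v _ => ite_adj_comm G v (Y j))
  have main : 2 * G.edgeFinset.card =
      (∑ i, ((∑ j, EGE G X Y i j) + EGt G X Y U i)) + ∑ j, EGt G X Y U j := by
    rw [← SimpleGraph.sum_degrees_eq_twice_card_edges,
      split_univ (fun v => G.degree v), hUdeg, hMvsum (fun v => G.degree v)]
    congr 1
    exact Finset.sum_congr rfl (fun i _ => hrow i)
  have e1 : ∑ i, ((∑ j, EGE G X Y i j) + EGt G X Y U i) =
      (∑ i, ∑ j, EGE G X Y i j) + ∑ i, EGt G X Y U i := Finset.sum_add_distrib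
  have e3 : ∑ i, ∑ j, EGE G X Y i j =
      (∑ i, EGE G X Y i i) + ∑ i, ∑ j ∈ univ.erase i, EGE G X Y i j := by
    rw [← Finset.sum_add_distrib]
    exact Finset.sum_congr rfl (fun i _ => (Finset.add_sum_erase _ _ (mem_univ i)).symm)
  have e4 : ∑ i, EGE G X Y i i = 2 * a := by
    rw [Finset.sum_congr rfl (fun i _ => C.EGEdiag i), Finset.sum_const, Finset.card_univ,
      Fintype.card_fin, smul_eq_mul, mul_comm]
  have swap : ∑ i, ∑ j ∈ univ.erase i, EGE G X Y i j
      = ∑ j, ∑ i ∈ univ.erase j, EGE G X Y i j := by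
    exact Finset.sum_congr rfl (fun i _ => Finset.sum_congr rfl
      (fun j _ => C.EGEsymm i j))
  have e5 : ∑ j, (2 * EGt G X Y U j + ∑ i ∈ univ.erase j, EGE G X Y i j) =
      2 * (∑ j, EGt G X Y U j) + ∑ j, ∑ i ∈ univ.erase j, EGE G X Y i j := by
    rw [Finset.sum_add_distrib, Finset.mul_sum]
  omega

lemma colBound (j : Fin a) :
    2 * EGt G X Y U j + (∑ i ∈ univ.erase j, EGE G X Y i j)
      + (if 3 ≤ EGt G X Y U j then 3 else 4)
      + (if 3 ≤ EGt G X Y U j then 0 else 2 * U.card)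
    ≤ 2 * U.card + (∑ i, (if 3 ≤ EGt G X Y U i then 3 else 4))
      + (if 3 ≤ EGt G X Y U j then 0 else 4) := by
  set bnd : Fin a → ℕ := fun i => if 3 ≤ EGt G X Y U i then 3 else 4 with hbnd
  have hsum : bnd j + ∑ i ∈ univ.erase j, bnd i = ∑ i, bnd i :=
    Finset.add_sum_erase _ (fun i => bnd i) (mem_univ j)
  have heta : univ.sum bnd = ∑ i, bnd i := rfl
  by_cases hj : 3 ≤ EGt G X Y U j
  · have h1 : EGt G X Y U j ≤ U.card := C.big_t_le hj
    have h2 : ∑ i ∈ univ.erase j, EGE G X Y i j ≤ ∑ i ∈ univ.erase j, bnd i := by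
      apply Finset.sum_le_sum
      intro i hi
      have hij : i ≠ j := (Finset.mem_erase.1 hi).1
      by_cases hbi : 3 ≤ EGt G X Y U i
      · simp only [hbnd, if_pos hbi]
        exact C.E_le_three_bigbig hij hbi hj
      · simp only [hbnd, if_neg hbi]
        exact C.E_le_four i j
    have hbj : bnd j = 3 := if_pos hj
    simp only [if_pos hj]
    omega
  · simp only [if_neg hj]
    have hbj : bnd j = 4 := if_neg hj
    have htj : EGt G X Y U j ≤ 2 := by omega
    by_cases ht0 : 1 ≤ EGt G X Y U j
    · have h2 : ∑ i ∈ univ.erase j, EGE G X Y i j ≤ ∑ i ∈ univ.erase j, bnd i := by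
        apply Finset.sum_le_sum
        intro i hi
        have hij : i ≠ j := (Finset.mem_erase.1 hi).1
        by_cases hbi : 3 ≤ EGt G X Y U i
        · simp only [hbnd, if_pos hbi]
          exact C.E_le_three_bigsmall hij hbi ht0
        · simp only [hbnd, if_neg hbi]
          exact C.E_le_four i j
      omega
    · by_cases hex : ∃ i₀ ∈ univ.erase j, 3 ≤ EGt G X Y U i₀ ∧ EGE G X Y i₀ j = 4
      · obtain ⟨i₀, hi₀mem, hbi₀, hEi₀⟩ := hex
        have hi₀j : i₀ ≠ j := (Finset.mem_erase.1 hi₀mem).1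
        have h2 : ∑ i ∈ (univ.erase j).erase i₀, EGE G X Y i j
            ≤ ∑ i ∈ (univ.erase j).erase i₀, bnd i := by
          apply Finset.sum_le_sum
          intro i hi
          have hii₀ : i ≠ i₀ := (Finset.mem_erase.1 hi).1
          have hij : i ≠ j := (Finset.mem_erase.1 (Finset.mem_erase.1 hi).2).1
          by_cases hbi : 3 ≤ EGt G X Y U i
          · simp only [hbnd, if_pos hbi]
            have hne4 : EGE G X Y i j ≠ 4 := by
              intro h4
              exact C.no_two_big_four hij hi₀j hii₀ hbi hbi₀ h4 hEi₀
            have := C.E_le_four i j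
            omega
          · simp only [hbnd, if_neg hbi]
            exact C.E_le_four i j
        have h3 : EGE G X Y i₀ j + ∑ i ∈ (univ.erase j).erase i₀, EGE G X Y i j
            = ∑ i ∈ univ.erase j, EGE G X Y i j :=
          Finset.add_sum_erase _ (fun i => EGE G X Y i j) hi₀mem
        have h4 : bnd i₀ + ∑ i ∈ (univ.erase j).erase i₀, bnd i
            = ∑ i ∈ univ.erase j, bnd i :=
          Finset.add_sum_erase _ (fun i => bnd i) hi₀mem
        have hbi₀v : bnd i₀ = 3 := if_pos hbi₀
        omega
      · push_neg at hex
        have h2 : ∑ i ∈ univ.erase j, EGE G X Y i j ≤ ∑ i ∈ univ.erase j, bnd i := by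
          apply Finset.sum_le_sum
          intro i hi
          by_cases hbi : 3 ≤ EGt G X Y U i
          · simp only [hbnd, if_pos hbi]
            have hne4 := hex i hi hbi
            have := C.E_le_four i j
            omega
          · simp only [hbnd, if_neg hbi]
            exact C.E_le_four i j
        omega

set_option maxHeartbeats 1000000 in
lemma allbig (hn : 5 * a + 3 < 2 * n)
    (hcard2 : 2 * G.edgeFinset.card + a * (a + 1) = 2 * (a * n)) :
    ∀ i, 3 ≤ EGt G X Y U i := by
  by_contra hxc
  push_neg at hxc
  obtain ⟨j₀, hj₀⟩ := hxc
  set m := U.card with hm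
  set bnd : Fin a → ℕ := fun i => if 3 ≤ EGt G X Y U i then 3 else 4 with hbnd
  set b := (univ.filter (fun i => 3 ≤ EGt G X Y U i)).card with hb
  set s := (univ.filter (fun i => ¬ 3 ≤ EGt G X Y U i)).card with hs
  have hbs : b + s = a := by
    rw [hb, hs, Finset.card_filter_add_card_filter_not, Finset.card_univ,
      Fintype.card_fin]
  have hs1 : 1 ≤ s := by
    rw [hs]
    apply Finset.card_pos.2
    exact ⟨j₀, Finset.mem_filter.2 ⟨mem_univ j₀, by omega⟩⟩
  have hbndsum : ∑ i, bnd i = 3 * b + 4 * s := by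
    rw [hbnd, Finset.sum_ite, Finset.sum_const, Finset.sum_const, smul_eq_mul, smul_eq_mul,
      hb, hs]
    ring
  -- sum the column bounds
  have hsumcol := Finset.sum_le_sum (fun j (_ : j ∈ (univ : Finset (Fin a))) => C.colBound j)
  have h1 : ∑ j, (if 3 ≤ EGt G X Y U j then (3:ℕ) else 4) = 3 * b + 4 * s := by
    rw [Finset.sum_ite, Finset.sum_const, Finset.sum_const, smul_eq_mul, smul_eq_mul]
    rw [hb, hs]; ring
  have h2 : ∑ j, (if 3 ≤ EGt G X Y U j then (0:ℕ) else 2 * m) = s * (2 * m) := by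
    rw [Finset.sum_ite, Finset.sum_const, Finset.sum_const, smul_eq_mul, smul_eq_mul]
    rw [hs]; simp
  have h3 : ∑ j, (if 3 ≤ EGt G X Y U j then (0:ℕ) else 4) = s * 4 := by
    rw [Finset.sum_ite, Finset.sum_const, Finset.sum_const, smul_eq_mul, smul_eq_mul]
    rw [hs]; simp
  set SC := ∑ j, (2 * EGt G X Y U j + ∑ i ∈ univ.erase j, EGE G X Y i j) with hSCdef
  have lhs_eq : ∑ j, (2 * EGt G X Y U j + (∑ i ∈ univ.erase j, EGE G X Y i j)
      + (if 3 ≤ EGt G X Y U j then 3 else 4) + (if 3 ≤ EGt G X Y U j then 0 else 2 * m))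
      = SC + (3 * b + 4 * s) + s * (2 * m) := by
    rw [Finset.sum_add_distrib, Finset.sum_add_distrib, h1, h2]
  have rhs_eq : ∑ (j : Fin a), (2 * m + (∑ i, (if 3 ≤ EGt G X Y U i then (3:ℕ) else 4))
      + (if 3 ≤ EGt G X Y U j then (0:ℕ) else 4))
      = a * (2 * m + (3 * b + 4 * s)) + s * 4 := by
    rw [Finset.sum_add_distrib, h3, h1, Finset.sum_const, Finset.card_univ,
      Fintype.card_fin, smul_eq_mul]
  rw [lhs_eq, rhs_eq] at hsumcol
  -- numeric endgame
  have h2e : 2 * G.edgeFinset.card = 2 * a + SC := C.count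
  have hSCeq : 2 * a + SC + a * (a + 1) = 2 * (a * n) := by omega
  have hUc := C.Ucard
  have pn : a * n = a * m + 2 * (a * a) := by
    have : n = m + 2 * a := by omega
    rw [this]; ring
  have pbs : a * b + a * s = a * a := by
    calc a * b + a * s = a * (b + s) := by ring
    _ = a * a := by rw [hbs]
  have h2m : a + 4 ≤ 2 * m := by omega
  have pe3 : s * a + s * 4 ≤ s * (2 * m) := by
    calc s * a + s * 4 = s * (a + 4) := by ring
    _ ≤ s * (2 * m) := Nat.mul_le_mul_left s h2m
  have expand : a * (2 * m + (3 * b + 4 * s)) = 2 * (a * m) + 3 * (a * b) + 4 * (a * s) := by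
    ring
  have hexp2 : a * (a + 1) = a * a + a := by ring
  rw [expand] at hsumcol
  rw [hexp2] at hSCeq
  nlinarith [hsumcol, hSCeq, pn, pbs, pe3, hs1, hbs]

end EGCtx
end Helpers

set_option maxHeartbeats 1000000 in
/-- if `α ≥ 1`, `n > (5α+3)/2`, `G` has matching number `α` and exactly
`αn - α(α+1)/2` edges, then `G ≅ S_{n,α}`. -/
theorem stmt7 {n a : ℕ} (ha : 1 ≤ a) (hn : 5 * a + 3 < 2 * n) (G : SimpleGraph (Fin n))
    (hmatch : HasMatching G a) (hnomatch : ¬ HasMatching G (a + 1))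
    (hcard : G.edgeSet.ncard = a * n - a * (a + 1) / 2) :
    Nonempty (G ≃g splitGraph n a) := by
  classical
  obtain ⟨p₀, h₀a, h₀d⟩ := hmatch
  set U : Finset (Fin n) :=
    (univ.biUnion fun i => ({(p₀ i).1, (p₀ i).2} : Finset (Fin n)))ᶜ with hUdef
  -- orientation: X i carries the U-neighbours whenever only one endpoint has them
  have hsetup : ∃ X Y : Fin a → Fin n, ∀ i,
      G.Adj (X i) (Y i) ∧ ({X i, Y i} : Finset (Fin n)) = {(p₀ i).1, (p₀ i).2} ∧
      ((X i = (p₀ i).1 ∧ Y i = (p₀ i).2) ∨ (X i = (p₀ i).2 ∧ Y i = (p₀ i).1)) ∧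
      ((¬ ∃ u ∈ U, G.Adj (X i) u) → ¬ ∃ u ∈ U, G.Adj (Y i) u) := by
    refine ⟨fun i => if (∃ u ∈ U, G.Adj (p₀ i).2 u) ∧ ¬(∃ u ∈ U, G.Adj (p₀ i).1 u)
      then (p₀ i).2 else (p₀ i).1,
      fun i => if (∃ u ∈ U, G.Adj (p₀ i).2 u) ∧ ¬(∃ u ∈ U, G.Adj (p₀ i).1 u)
      then (p₀ i).1 else (p₀ i).2, fun i => ?_⟩
    dsimp only
    by_cases hsw : (∃ u ∈ U, G.Adj (p₀ i).2 u) ∧ ¬(∃ u ∈ U, G.Adj (p₀ i).1 u)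
    · rw [if_pos hsw, if_pos hsw]
      exact ⟨(h₀a i).symm, Finset.pair_comm _ _, Or.inr ⟨rfl, rfl⟩,
        fun hX _ => absurd hsw.1 hX⟩
    · rw [if_neg hsw, if_neg hsw]
      exact ⟨h₀a i, rfl, Or.inl ⟨rfl, rfl⟩, fun hX hY => hsw ⟨hY, hX⟩⟩
  obtain ⟨X, Y, hXYprop⟩ := hsetup
  have hvd : ∀ i j, i ≠ j → EGVD (X i, Y i) (X j, Y j) := by
    intro i j hij
    obtain ⟨d1, d2, d3, d4⟩ := h₀d i j hij
    rcases (hXYprop i).2.2.1 with ⟨e1, e2⟩ | ⟨e1, e2⟩ <;>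
      rcases (hXYprop j).2.2.1 with ⟨f1, f2⟩ | ⟨f1, f2⟩ <;>
      refine ⟨?_, ?_, ?_, ?_⟩ <;> rw [e1, f1] <;> rw [e2, f2] <;> first
      | exact d1 | exact d2 | exact d3 | exact d4
  have hUfact : U = (univ.biUnion fun i => ({X i, Y i} : Finset (Fin n)))ᶜ := by
    rw [hUdef]
    congr 1
    exact (Finset.biUnion_congr rfl (fun i _ => (hXYprop i).2.1)).symm
  have C : EGCtx G X Y U :=
    ⟨fun i => (hXYprop i).1, hvd, hUfact, hnomatch, fun i => (hXYprop i).2.2.2⟩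
  -- edge count in doubled form
  have hEcard : G.edgeFinset.card = a * n - a * (a + 1) / 2 := by
    rw [← Set.ncard_coe_finset, SimpleGraph.coe_edgeFinset]
    exact hcard
  obtain ⟨c, hc⟩ := Nat.even_mul_succ_self a
  have hc2 : a * (a + 1) / 2 = c := by omega
  have hle2 : a * (a + 1) ≤ 2 * (a * n) := by
    calc a * (a + 1) ≤ a * (2 * n) := Nat.mul_le_mul_left a (by omega)
    _ = 2 * (a * n) := by ring
  rw [hc2] at hEcard
  have hcard2 : 2 * G.edgeFinset.card + a * (a + 1) = 2 * (a * n) := by omega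
  -- every matching edge is "big"
  have hAllBig : ∀ i, 3 ≤ EGt G X Y U i := C.allbig hn hcard2
  -- the clique
  have hXinj : Function.Injective X := by
    intro i j h
    by_contra hij
    exact C.XX hij h
  set K : Finset (Fin n) := univ.image X with hKdef
  have hKcard : K.card = a := by
    rw [hKdef, Finset.card_image_of_injective _ hXinj, Finset.card_univ, Fintype.card_fin]
  have hXK : ∀ i, X i ∈ K := fun i => Finset.mem_image_of_mem X (mem_univ i)
  -- classification of non-clique vertices
  have hclass : ∀ z : Fin n, z ∉ K → z ∈ U ∨ ∃ i, z = Y i := by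
    intro z hz
    by_cases hzU : z ∈ U
    · exact Or.inl hzU
    · right
      rw [hUfact, Finset.mem_compl, not_not] at hzU
      obtain ⟨i, -, hzi⟩ := Finset.mem_biUnion.1 hzU
      simp only [Finset.mem_insert, Finset.mem_singleton] at hzi
      rcases hzi with rfl | rfl
      · exact absurd (hXK i) hz
      · exact ⟨i, rfl⟩
  have hYYadj : ∀ i j, i ≠ j → ¬ G.Adj (Y i) (Y j) := by
    intro i j hij hadj
    obtain ⟨u, hu⟩ := Finset.card_pos.1 (by have := C.bigNX (hAllBig i); omega :
      0 < (U.filter (fun u => G.Adj (X i) u)).card)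
    obtain ⟨v, hv, hvu⟩ := Finset.exists_mem_ne
      (s := U.filter (fun u => G.Adj (X j) u)) (by have := C.bigNX (hAllBig j); omega) u
    simp only [Finset.mem_filter] at hu hv
    exact C.YYaug hij hu.1 hv.1 (fun h => hvu h.symm) hu.2 hv.2 hadj
  have hGsub : ∀ v w : Fin n, G.Adj v w → v ∈ K ∨ w ∈ K := by
    intro v w hadj
    by_contra hcon
    push_neg at hcon
    rcases hclass v hcon.1 with hv | ⟨i, rfl⟩ <;> rcases hclass w hcon.2 with hw | ⟨j, hw⟩
    · exact C.Uind hv hw hadj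
    · subst hw
      exact C.bigYU (hAllBig j) hv hadj.symm
    · exact C.bigYU (hAllBig i) hw hadj
    · subst hw
      have hij : i ≠ j := by rintro rfl; exact G.irrefl hadj
      exact hYYadj i j hij hadj
  -- the complete split graph H on clique K
  have h2an : 2 * a ≤ n := by have := C.Ucard; omega
  set H : SimpleGraph (Fin n) :=
    { Adj := fun v w => v ≠ w ∧ (v ∈ K ∨ w ∈ K),
      symm := ⟨fun v w h => ⟨h.1.symm, h.2.symm⟩⟩,
      loopless := ⟨fun v h => h.1 rfl⟩ } with hHdef
  have hle : G ≤ H := by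
    intro v w h
    exact ⟨h.ne, hGsub v w h⟩
  have hHdeg : ∀ v, H.degree v = if v ∈ K then n - 1 else a := by
    intro v
    rw [show H.degree v = (H.neighborFinset v).card from rfl,
      SimpleGraph.neighborFinset_eq_filter]
    by_cases hv : v ∈ K
    · rw [if_pos hv]
      have hf : univ.filter (H.Adj v) = univ.erase v := by
        ext w
        simp only [Finset.mem_filter, Finset.mem_erase, mem_univ, true_and, and_true]
        constructor
        · rintro ⟨hvw, -⟩
          exact fun h => hvw h.symm
        · intro hwv
          exact ⟨fun h => hwv h.symm, Or.inl hv⟩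
      rw [hf, Finset.card_erase_of_mem (mem_univ v), Finset.card_univ, Fintype.card_fin]
    · rw [if_neg hv]
      have hf : univ.filter (H.Adj v) = K := by
        ext w
        simp only [Finset.mem_filter, mem_univ, true_and]
        constructor
        · rintro ⟨hvw, hK | hK⟩
          · exact absurd hK hv
          · exact hK
        · intro hw
          exact ⟨fun h => hv (h ▸ hw), Or.inr hw⟩
      rw [hf, hKcard]
  have hKuniv : univ.filter (fun v : Fin n => v ∈ K) = K := by
    ext w; simp
  have hKcuniv : (univ.filter (fun v : Fin n => ¬ v ∈ K)).card = n - a := by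
    have : univ.filter (fun v : Fin n => ¬ v ∈ K) = Kᶜ := by
      ext w; simp
    rw [this, Finset.card_compl, Fintype.card_fin, hKcard]
  have h2H : 2 * H.edgeFinset.card = a * (n - 1) + (n - a) * a := by
    rw [← SimpleGraph.sum_degrees_eq_twice_card_edges,
      Finset.sum_congr rfl (fun v (_ : v ∈ univ) => hHdeg v), Finset.sum_ite,
      Finset.sum_const, Finset.sum_const, smul_eq_mul, smul_eq_mul, hKuniv, hKcard,
      hKcuniv]
  have hn1 : 1 ≤ n := by omega
  have e1 : a * (n - 1) + a = a * n := by
    calc a * (n - 1) + a = a * ((n - 1) + 1) := by ring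
    _ = a * n := by rw [Nat.sub_add_cancel hn1]
  have e2 : (n - a) * a + a * a = n * a := by
    calc (n - a) * a + a * a = ((n - a) + a) * a := by ring
    _ = n * a := by rw [Nat.sub_add_cancel (by omega : a ≤ n)]
  have e4 : n * a = a * n := Nat.mul_comm n a
  have hexp2 : a * (a + 1) = a * a + a := by ring
  have h2GH : 2 * H.edgeFinset.card = 2 * G.edgeFinset.card := by
    linarith [h2H, e1, e2, hcard2, hexp2, e4]
  have heq : H.edgeFinset.card ≤ G.edgeFinset.card := by omega
  have hfeq : G.edgeFinset = H.edgeFinset :=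
    Finset.eq_of_subset_of_card_le (SimpleGraph.edgeFinset_mono hle) heq
  have hGH : G = H := (SimpleGraph.edgeFinset_inj).1 hfeq
  -- build the isomorphism
  let eK : {v : Fin n // v ∈ K} ≃ Fin a :=
    Fintype.equivFinOfCardEq (by rw [Fintype.card_coe, hKcard])
  let eKc : {v : Fin n // v ∉ K} ≃ Fin (n - a) :=
    Fintype.equivFinOfCardEq
      (by rw [Fintype.card_subtype_compl, Fintype.card_fin, Fintype.card_coe, hKcard])
  let σ : Fin n ≃ Fin n := (Equiv.sumCompl (· ∈ K)).symm.trans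
    ((eK.sumCongr eKc).trans (finSumFinEquiv.trans (finCongr (by omega : a + (n - a) = n))))
  have hσ : ∀ v : Fin n, ((σ v : ℕ) < a ↔ v ∈ K) := by
    intro v
    by_cases hv : v ∈ K
    · simp only [σ, Equiv.trans_apply, Equiv.sumCompl_symm_apply_of_pos hv,
        Equiv.sumCongr_apply, Sum.map_inl, finSumFinEquiv_apply_left, finCongr_apply,
        Fin.coe_cast, Fin.coe_castAdd]
      exact iff_of_true (eK ⟨v, hv⟩).isLt hv
    · simp only [σ, Equiv.trans_apply, Equiv.sumCompl_symm_apply_of_neg hv,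
        Equiv.sumCongr_apply, Sum.map_inr, finSumFinEquiv_apply_right, finCongr_apply,
        Fin.coe_cast, Fin.coe_natAdd]
      exact iff_of_false (by omega) hv
  refine ⟨{ toEquiv := σ, map_rel_iff' := ?_ }⟩
  intro u v
  show (splitGraph n a).Adj (σ u) (σ v) ↔ G.Adj u v
  rw [hGH]
  show (σ u ≠ σ v ∧ ((σ u : ℕ) < a ∨ (σ v : ℕ) < a)) ↔ (u ≠ v ∧ (u ∈ K ∨ v ∈ K))
  constructor
  · rintro ⟨hne, hlt⟩
    refine ⟨fun h => hne (by rw [h]), ?_⟩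
    rcases hlt with h | h
    · exact Or.inl ((hσ u).1 h)
    · exact Or.inr ((hσ v).1 h)
  · rintro ⟨hne, hK⟩
    refine ⟨fun h => hne (σ.injective h), ?_⟩
    rcases hK with h | h
    · exact Or.inl ((hσ u).2 h)
    · exact Or.inr ((hσ v).2 h)


end
end
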